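/- Let λ₁ > 0 and integers m ≠ n, m, n ≥ 1 satisfy 1 = (1/(2m)) ∫_{-1}^1 (-φ'(z̄))/(1 + λ₁ - z̄) dz̄, with φ' ∈ L^∞([-1,1]). Then for every F ∈ L²([-1,1]), the unique solution f ∈ L²([-1,1]) of (1 + λ₁ - z) f(z) + (1/(2n)) ∫_{-1}^1 φ'(z̄) f(z̄) dz̄ = F(z) is f(z) = (1/(1+λ₁-z)) ( F(z) + (1/(2(m-n))) ∫_{-1}^1 φ'(z̄) F(z̄)/(1+λ₁-z̄) dz̄ ). -/

import Mathlib

open Real MeasureTheory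

lemma aux_intint_bdd (g : ℝ → ℝ) (hg : Measurable g) (C : ℝ)
    (hb : ∀ z ∈ Set.Ioc (-1:ℝ) 1, |g z| ≤ C) :
    IntervalIntegrable g volume (-1) 1 := by
  rw [intervalIntegrable_iff_integrableOn_Ioc_of_le (by norm_num)]
  refine ⟨hg.aestronglyMeasurable, ?_⟩
  apply MeasureTheory.HasFiniteIntegral.of_bounded (C := C)
  rw [ae_restrict_iff' measurableSet_Ioc]
  filter_upwards with z hz
  simpa [Real.norm_eq_abs] using hb z hz

theorem inversion_off_resonant_mode (lam₁ : ℝ) (hlam : 0 < lam₁)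
    (m n : ℕ) (hm : 1 ≤ m) (hn : 1 ≤ n) (hmn : m ≠ n)
    (φ' : ℝ → ℝ) (hφmeas : Measurable φ') (Cφ : ℝ) (hφb : ∀ z, |φ' z| ≤ Cφ)
    (heq : 1 = (1 / (2 * m)) * ∫ z in (-1:ℝ)..1, (-φ' z) / (1 + lam₁ - z))
    (F : ℝ → ℝ) (hF : MemLp F 2 (MeasureTheory.volume.restrict (Set.Icc (-1:ℝ) 1))) :
    let sol : ℝ → ℝ := fun z =>
      (1 / (1 + lam₁ - z)) *
        (F z + (1 / (2 * ((m : ℝ) - (n : ℝ)))) *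
          ∫ w in (-1:ℝ)..1, φ' w * F w / (1 + lam₁ - w))
    (∀ z ∈ Set.Icc (-1:ℝ) 1,
        (1 + lam₁ - z) * sol z + (1 / (2 * n)) * (∫ w in (-1:ℝ)..1, φ' w * sol w) = F z) ∧
    (∀ f : ℝ → ℝ, MemLp f 2 (MeasureTheory.volume.restrict (Set.Icc (-1:ℝ) 1)) →
      (∀ z ∈ Set.Icc (-1:ℝ) 1,
        (1 + lam₁ - z) * f z + (1 / (2 * n)) * (∫ w in (-1:ℝ)..1, φ' w * f w) = F z) →
      ∀ z ∈ Set.Icc (-1:ℝ) 1, f z = sol z) := by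
  intro sol
  have hm0 : (m:ℝ) ≠ 0 := by positivity
  have hn0 : (n:ℝ) ≠ 0 := by positivity
  have hmn0 : (m:ℝ) - n ≠ 0 := sub_ne_zero.mpr (by exact_mod_cast hmn)
  have hane : ∀ z ∈ Set.Icc (-1:ℝ) 1, (1 + lam₁ - z) ≠ 0 := by
    intro z hz
    have : (0:ℝ) < 1 + lam₁ - z := by linarith [hz.2]
    exact this.ne'
  set K := ∫ w in (-1:ℝ)..1, φ' w / (1 + lam₁ - w) with hKdef
  set J := ∫ w in (-1:ℝ)..1, φ' w * F w / (1 + lam₁ - w) with hJdef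
  set c := (1 / (2 * ((m : ℝ) - (n : ℝ)))) * J with hcdef
  have hbK : ∀ z ∈ Set.Ioc (-1:ℝ) 1, |φ' z / (1 + lam₁ - z)| ≤ Cφ / lam₁ := by
    intro z hz
    have h1 : lam₁ ≤ 1 + lam₁ - z := by linarith [hz.2]
    rw [abs_div, abs_of_pos (by linarith : (0:ℝ) < 1 + lam₁ - z)]
    exact div_le_div₀ (le_trans (abs_nonneg _) (hφb 0)) (hφb z) hlam h1
  have hKint : IntervalIntegrable (fun w => φ' w / (1 + lam₁ - w)) volume (-1) 1 :=
    aux_intint_bdd _ (hφmeas.div ((measurable_const.sub measurable_id))) _ hbK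
  have hFint : IntegrableOn F (Set.Ioc (-1:ℝ) 1) :=
    (hF.integrable (by norm_num)).mono_measure
      (Measure.restrict_mono Set.Ioc_subset_Icc_self le_rfl)
  have hJint : IntervalIntegrable (fun w => φ' w * F w / (1 + lam₁ - w)) volume (-1) 1 := by
    rw [intervalIntegrable_iff_integrableOn_Ioc_of_le (by norm_num)]
    have h : (fun w => φ' w * F w / (1 + lam₁ - w)) =
        fun w => (φ' w / (1 + lam₁ - w)) * F w := by
      funext w; ring
    rw [h]
    apply Integrable.bdd_mul (c := Cφ / lam₁) hFint
      ((hφmeas.div ((measurable_const.sub measurable_id))).aestronglyMeasurable)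
    rw [ae_restrict_iff' measurableSet_Ioc]
    filter_upwards with z hz
    simpa [Real.norm_eq_abs, abs_div] using hbK z hz
  have hKval : K = -(2*m) := by
    have h1 : (∫ z in (-1:ℝ)..1, (-φ' z) / (1 + lam₁ - z)) = -K := by
      rw [hKdef, ← intervalIntegral.integral_neg]
      congr 1; funext z; ring
    rw [h1] at heq
    field_simp at heq
    linarith
  -- pointwise identity for φ' * sol
  have hsol_pt : ∀ w, φ' w * sol w =
      φ' w * F w / (1 + lam₁ - w) + c * (φ' w / (1 + lam₁ - w)) := by
    intro w
    simp only [sol]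
    rw [← hJdef, ← hcdef]
    rcases eq_or_ne (1 + lam₁ - w) 0 with h | h
    · simp [h]
    · field_simp
  have hsolint : (∫ w in (-1:ℝ)..1, φ' w * sol w) = J + c * K := by
    have h : (∫ w in (-1:ℝ)..1, φ' w * sol w) =
        ∫ w in (-1:ℝ)..1, (φ' w * F w / (1 + lam₁ - w) + c * (φ' w / (1 + lam₁ - w))) := by
      congr 1; funext w; exact hsol_pt w
    rw [h, intervalIntegral.integral_add hJint (hKint.const_mul c),
      intervalIntegral.integral_const_mul, ← hJdef, ← hKdef]
  have hsolval : ∀ z ∈ Set.Icc (-1:ℝ) 1, (1 + lam₁ - z) * sol z = F z + c := by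
    intro z hz
    have ha := hane z hz
    simp only [sol]
    rw [← hJdef, ← hcdef]
    field_simp
  have hkey : c + (1/(2*(n:ℝ)))*(J + c*(-(2*m))) = 0 := by
    rw [hcdef]
    field_simp
    ring
  have hexist : ∀ z ∈ Set.Icc (-1:ℝ) 1,
      (1 + lam₁ - z) * sol z + (1 / (2 * n)) * (∫ w in (-1:ℝ)..1, φ' w * sol w) = F z := by
    intro z hz
    rw [hsolint, hKval, hsolval z hz]
    linear_combination hkey
  refine ⟨hexist, ?_⟩
  intro f hf hfeq z hz
  set I := ∫ w in (-1:ℝ)..1, φ' w * f w with hIdef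
  have hf_pt : ∀ w ∈ Set.Icc (-1:ℝ) 1, f w = (F w - I/(2*n)) / (1 + lam₁ - w) := by
    intro w hw
    have ha := hane w hw
    have h := hfeq w hw
    field_simp at h ⊢
    linarith
  have hIeq : I = J - (I/(2*n)) * K := by
    have h1 : (∫ w in (-1:ℝ)..1, φ' w * f w) =
        ∫ w in (-1:ℝ)..1, φ' w * ((F w - I/(2*n)) / (1 + lam₁ - w)) := by
      apply intervalIntegral.integral_congr
      intro w hw
      have hw' : w ∈ Set.Icc (-1:ℝ) 1 := by
        rwa [Set.uIcc_of_le (by norm_num : (-1:ℝ) ≤ 1)] at hw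
      show φ' w * f w = φ' w * ((F w - I/(2*n)) / (1 + lam₁ - w))
      rw [hf_pt w hw']
    have h2 : ∀ w, φ' w * ((F w - I/(2*n)) / (1 + lam₁ - w)) =
        φ' w * F w / (1 + lam₁ - w) - (I/(2*n)) * (φ' w / (1 + lam₁ - w)) := by
      intro w
      rcases eq_or_ne (1 + lam₁ - w) 0 with h | h
      · simp [h]
      · field_simp
    conv_lhs => rw [hIdef]
    rw [h1]
    simp_rw [h2]
    rw [intervalIntegral.integral_sub hJint (hKint.const_mul _),
      intervalIntegral.integral_const_mul, ← hJdef, ← hKdef]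
  rw [hKval] at hIeq
  have hrel : (n:ℝ) * I = n * J + m * I := by
    field_simp at hIeq
    linarith
  have hc : -(I/(2*(n:ℝ))) = c := by
    rw [hcdef]
    field_simp
    linear_combination hrel
  rw [hf_pt z hz]
  simp only [sol]
  rw [← hJdef, ← hcdef, ← hc]
  have ha := hane z hz
  field_simp
  ring
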